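/- Let q be a prime, let n ≥ 1, and let C_α be a Singer subgroup of GL(n,q), i.e., the cyclic subgroup generated by an element of order q^n − 1. Then the normalizer A_α of C_α in GL(n,q) has order n·(q^n − 1). -/

import Mathlib

set_option maxHeartbeats 1000000
set_option synthInstance.maxHeartbeats 100000

open Polynomial Matrix

namespace SingerAux

variable {q n : ℕ} [Fact (Nat.Prime q)]

instance : NeZero q := ⟨(Fact.out : Nat.Prime q).ne_zero⟩

local notation "Mx" => Matrix (Fin n) (Fin n) (ZMod q)
local notation "V" => (Fin n → ZMod q)

/-- The subalgebra generated by a matrix. -/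
def SA (m : Mx) : Subalgebra (ZMod q) Mx := Algebra.adjoin (ZMod q) {m}

lemma mem_SA_self (m : Mx) : m ∈ SA m := Algebra.self_mem_adjoin_singleton _ m

lemma SA_conj_mem {m : Mx} {a b : Mx} (ha : a ∈ SA m) (hb : b ∈ SA m) :
    a * b = b * a :=
  (Algebra.commute_of_mem_adjoin_singleton_of_commute ha
    (Algebra.commute_of_mem_adjoin_self hb).symm).symm.eq

instance (m : Mx) : CommRing (SA m) :=
  { (inferInstance : Ring (SA m)) with
    mul_comm := fun a b => Subtype.ext (SA_conj_mem a.2 b.2) }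

/-- minpoly of a matrix has degree at most n. -/
lemma natDegree_minpoly_le (m : Mx) : (minpoly (ZMod q) m).natDegree ≤ n := by
  have h1 := Matrix.minpoly_dvd_charpoly m
  have h2 : m.charpoly ≠ 0 := m.charpoly_monic.ne_zero
  have := Polynomial.natDegree_le_of_dvd h1 h2
  rwa [Matrix.charpoly_natDegree_eq_dim, Fintype.card_fin] at this

lemma card_SA_le [NeZero n] (m : Mx) : Nat.card (SA m) ≤ q ^ n := by
  have hint : IsIntegral (ZMod q) m := .of_finite _ _
  have hmo := minpoly.monic hint
  have hsurj : Function.Surjective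
      (fun c : Fin n → ZMod q =>
        (∑ i : Fin n, c i • (⟨m, mem_SA_self m⟩ : SA m) ^ (i : ℕ) : SA m)) := by
    rintro ⟨x, hx⟩
    rw [SA, Algebra.adjoin_singleton_eq_range_aeval] at hx
    obtain ⟨p, hp⟩ := hx
    have hp' : aeval m p = x := hp
    have hre : aeval m (p %ₘ minpoly (ZMod q) m) = x := by
      rw [Polynomial.modByMonic_eq_sub_mul_div _ (minpoly (ZMod q) m), _root_.map_sub, _root_.map_mul,
        minpoly.aeval, zero_mul, sub_zero, hp']
    have hdeg : (p %ₘ minpoly (ZMod q) m).natDegree < n := by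
      rcases eq_or_ne (p %ₘ minpoly (ZMod q) m) 0 with h | h
      · rw [h, Polynomial.natDegree_zero]
        exact Nat.pos_of_ne_zero (NeZero.ne n)
      · have := Polynomial.natDegree_lt_natDegree h
          (Polynomial.degree_modByMonic_lt p hmo)
        exact lt_of_lt_of_le this (natDegree_minpoly_le m)
    refine ⟨fun i => (p %ₘ minpoly (ZMod q) m).coeff i, Subtype.ext ?_⟩
    have hsum := Polynomial.aeval_eq_sum_range' hdeg (x := m)
    have hcoe : ((∑ i : Fin n, (p %ₘ minpoly (ZMod q) m).coeff i •
        (⟨m, mem_SA_self m⟩ : SA m) ^ (i : ℕ) : SA m) : Mx)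
        = ∑ i : Fin n, (p %ₘ minpoly (ZMod q) m).coeff i • m ^ (i : ℕ) := by
      push_cast
      rfl
    rw [hcoe, Fin.sum_univ_eq_sum_range (fun i => (p %ₘ minpoly (ZMod q) m).coeff i • m ^ i) n,
      ← hsum, hre]
  calc Nat.card (SA m) ≤ Nat.card (Fin n → ZMod q) := Nat.card_le_card_of_surjective _ hsurj
    _ = q ^ n := by simp [Nat.card_eq_fintype_card, ZMod.card]

/-- elements of the cyclic group generated by `g` have matrix in `SA g.val`. -/
lemma units_val_mem_SA {g : Mxˣ} (ho : orderOf g ≠ 0) {x : Mxˣ}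
    (hx : x ∈ Subgroup.zpowers g) : (x : Mx) ∈ SA (g : Mx) := by
  obtain ⟨k, rfl⟩ := Subgroup.mem_zpowers_iff.mp hx
  have h1 : g ^ (k : ℤ) = g ^ ((k % (orderOf g : ℤ)).toNat) := by
    rw [← zpow_natCast,
      Int.toNat_of_nonneg (Int.emod_nonneg k (by exact_mod_cast ho)), zpow_mod_orderOf]
  rw [h1, Units.val_pow_eq_pow_val]
  exact pow_mem (mem_SA_self _) _

/-- conjugation by a unit as an algebra homomorphism. -/
noncomputable def conjAlgHom (w : Mxˣ) : Mx →ₐ[ZMod q] Mx :=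
  MulSemiringAction.toAlgHom (ZMod q) Mx (ConjAct.toConjAct w)

lemma conjAlgHom_apply (w : Mxˣ) (x : Mx) :
    conjAlgHom w x = (w : Mx) * x * ((w⁻¹ : Mxˣ) : Mx) := by
  simp [conjAlgHom, MulSemiringAction.toAlgHom_apply, ConjAct.units_smul_def]

/-- the module structure of `V` over `SA m`. -/
instance saSMul (m : Mx) : SMul (SA m) V := ⟨fun a v => (a : Mx) *ᵥ v⟩

lemma sa_smul_def (m : Mx) (a : SA m) (v : V) : a • v = (a : Mx) *ᵥ v := rfl

instance saModule (m : Mx) : Module (SA m) V where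
  smul := (· • ·)
  one_smul v := by rw [sa_smul_def]; simp
  mul_smul a b v := by simp only [sa_smul_def, MulMemClass.coe_mul, ← mulVec_mulVec]
  smul_zero a := by rw [sa_smul_def]; simp
  smul_add a v w := by simp only [sa_smul_def, mulVec_add]
  add_smul a b v := by simp only [sa_smul_def, AddMemClass.coe_add, add_mulVec]
  zero_smul v := by rw [sa_smul_def]; simp

lemma algebraMap_smul_eq (m : Mx) (c : ZMod q) (v : V) :
    (algebraMap (ZMod q) (SA m) c) • v = c • v := by
  rw [sa_smul_def]
  have : ((algebraMap (ZMod q) (SA m) c : SA m) : Mx) = c • (1 : Mx) := by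
    rw [← Algebra.algebraMap_eq_smul_one]; rfl
  rw [this, smul_mulVec, one_mulVec]

/-- matrices commuting with `m` lie in `SA m`, provided `V ≃ₗ[SA m] SA m`. -/
lemma mem_SA_of_commute (m : Mx) (e : V ≃ₗ[SA m] (SA m)) {x : Mx}
    (hx : x * m = m * x) : x ∈ SA m := by
  have hcomm : ∀ b ∈ SA m, x * b = b * x := fun b hb =>
    (Algebra.commute_of_mem_adjoin_singleton_of_commute hb hx).eq
  let f : V →ₗ[SA m] V :=
    { toFun := fun v => x *ᵥ v
      map_add' := fun v w => mulVec_add _ _ _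
      map_smul' := fun a v => by
        simp only [sa_smul_def, RingHom.id_apply, mulVec_mulVec, hcomm (a : Mx) a.2] }
  set a : SA m := e (f (e.symm 1)) with ha
  have key : ∀ v : V, f v = a • v := by
    intro v
    have hv : v = (e v) • (e.symm 1) := by
      apply e.injective
      rw [_root_.map_smul, smul_eq_mul, e.apply_symm_apply, mul_one]
    have hfv : f v = (e v) • f (e.symm 1) := by
      conv_lhs => rw [hv]
      exact f.map_smul _ _
    have h5 : e (f v) = a * e v := by
      rw [hfv, _root_.map_smul, smul_eq_mul, ← ha, mul_comm]
    apply e.injective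
    rw [h5, _root_.map_smul, smul_eq_mul]
  have hxa : x = (a : Mx) := by
    have h2 : ∀ v : V, x *ᵥ v = (a : Mx) *ᵥ v := fun v => key v
    refine Matrix.toLin'.injective (LinearMap.ext fun v => ?_)
    rw [Matrix.toLin'_apply, Matrix.toLin'_apply]
    exact h2 v
  rw [hxa]; exact a.2

lemma cent_le_norm {G : Type*} [Group G] (H : Subgroup G) :
    Subgroup.centralizer (H : Set G) ≤ Subgroup.normalizer (H : Set G) := by
  intro x hx
  rw [Subgroup.mem_normalizer_iff]
  intro y
  constructor
  · intro hy
    have := Subgroup.mem_centralizer_iff.mp hx y hy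
    rw [show x * y * x⁻¹ = y from by rw [← this]; group]
    exact hy
  · intro hy
    have hc := Subgroup.mem_centralizer_iff.mp hx _ hy
    have h3 : x * y = x * (x * y * x⁻¹) := by
      calc x * y = (x * y * x⁻¹) * x := by group
        _ = x * (x * y * x⁻¹) := hc
    have hyy := mul_left_cancel h3
    rw [hyy]; exact hy

lemma mem_normalizer_of_conj_pow {G : Type*} [Group G] [Finite G] {g h : G} {k : ℕ}
    (hc : h * g * h⁻¹ = g ^ k) : h ∈ Subgroup.normalizer ((Subgroup.zpowers g : Subgroup G) : Set G) := by
  set C := Subgroup.zpowers g with hC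
  have hmap : C.map (MulAut.conj h).toMonoidHom = C := by
    apply Subgroup.eq_of_le_of_card_ge
    · rw [hC, MonoidHom.map_zpowers]
      have : (MulAut.conj h).toMonoidHom g = g ^ k := by
        simpa [MulAut.conj] using hc
      rw [this]
      intro x hx
      obtain ⟨j, hj⟩ := Subgroup.mem_zpowers_iff.mp hx
      refine Subgroup.mem_zpowers_iff.mpr ⟨(k : ℤ) * j, ?_⟩
      rw [_root_.zpow_mul, zpow_natCast, hj]
    · exact le_of_eq (Nat.card_congr
        (Subgroup.equivMapOfInjective C (MulAut.conj h).toMonoidHom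
          (fun a b hab => (MulAut.conj h).injective hab)).toEquiv)
  rw [Subgroup.mem_normalizer_iff]
  intro y
  constructor
  · intro hy
    have : (MulAut.conj h).toMonoidHom y ∈ C.map (MulAut.conj h).toMonoidHom :=
      Subgroup.mem_map_of_mem _ hy
    rw [hmap] at this
    simpa [MulAut.conj] using this
  · intro hy
    have hy' : h * y * h⁻¹ ∈ C.map (MulAut.conj h).toMonoidHom := by
      rw [hmap]; exact hy
    obtain ⟨z, hz, hzz⟩ := hy'
    have : z = y := by
      have : h * z * h⁻¹ = h * y * h⁻¹ := by simpa [MulAut.conj] using hzz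
      have h2 := mul_right_cancel this
      exact mul_left_cancel h2
    rwa [← this]


variable [NeZero n]

/-- The key counting argument: `SA g` is a field with `q ^ n` elements. -/
lemma isField_SA (g : Mxˣ) (hg : orderOf g = q ^ n - 1) :
    IsField (SA ((g : Mx))) ∧ Nat.card (SA ((g : Mx))) = q ^ n ∧
      Nat.card (SA ((g : Mx)))ˣ = q ^ n - 1 := by
  have hq2 : 2 ≤ q := (Fact.out : Nat.Prime q).two_le
  have hqn : 2 ≤ q ^ n := le_trans hq2 (Nat.le_self_pow (NeZero.ne n) q)
  have hopos : orderOf g ≠ 0 := by rw [hg]; omega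
  set A := SA ((g : Mx)) with hA
  have hginvmem : ((g⁻¹ : Mxˣ) : Mx) ∈ A :=
    units_val_mem_SA hopos (Subgroup.inv_mem _ (Subgroup.mem_zpowers g))
  set u : Aˣ :=
    { val := ⟨(g : Mx), mem_SA_self _⟩
      inv := ⟨((g⁻¹ : Mxˣ) : Mx), hginvmem⟩
      val_inv := Subtype.ext g.mul_inv
      inv_val := Subtype.ext g.inv_mul } with hu_def
  have hval_inj : Function.Injective (A.val.toRingHom.toMonoidHom : A →* Mx) :=
    fun a b hab => Subtype.ext hab
  have humap : (Units.map (A.val.toRingHom.toMonoidHom)) u = g := Units.ext rfl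
  have hu : orderOf u = q ^ n - 1 := by
    rw [← hg, ← humap]
    exact (orderOf_injective _ (Units.map_injective hval_inj) u).symm
  haveI : Fintype A := Fintype.ofFinite A
  haveI : Fintype Aˣ := Fintype.ofFinite _
  haveI : Nontrivial A :=
    ⟨⟨1, 0, fun h => one_ne_zero (α := Mx) (congrArg Subtype.val h)⟩⟩
  have hcardA_le : Fintype.card A ≤ q ^ n := by
    have := card_SA_le ((g : Mx))
    rwa [Nat.card_eq_fintype_card] at this
  have hcardU_ge : q ^ n - 1 ≤ Fintype.card Aˣ := by
    refine Nat.le_of_dvd Fintype.card_pos ?_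
    rw [← hu]; exact orderOf_dvd_card
  have huval_inj : Function.Injective (Units.val : Aˣ → A) := fun a b h => Units.ext h
  set S : Finset A := Finset.univ.image (Units.val : Aˣ → A) with hS
  have hScard : S.card = Fintype.card Aˣ := by
    rw [hS, Finset.card_image_of_injective _ huval_inj, Finset.card_univ]
  have hSsub : S ⊆ Finset.univ.erase 0 := by
    intro a ha
    rw [Finset.mem_erase]
    refine ⟨?_, Finset.mem_univ a⟩
    rw [hS, Finset.mem_image] at ha
    obtain ⟨w, _, rfl⟩ := ha
    exact Units.ne_zero w
  have herase : (Finset.univ.erase (0:A)).card = Fintype.card A - 1 := by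
    rw [Finset.card_erase_of_mem (Finset.mem_univ _), Finset.card_univ]
  have hchain : q ^ n - 1 ≤ Fintype.card A - 1 := by
    calc q ^ n - 1 ≤ Fintype.card Aˣ := hcardU_ge
      _ = S.card := hScard.symm
      _ ≤ Fintype.card A - 1 := by rw [← herase]; exact Finset.card_le_card hSsub
  have hApos : 0 < Fintype.card A := Fintype.card_pos
  have hcardA : Fintype.card A = q ^ n := by omega
  have hSeq : S = Finset.univ.erase 0 := by
    refine Finset.eq_of_subset_of_card_le hSsub ?_
    rw [herase, hScard]; omega
  have hcardU : Fintype.card Aˣ = q ^ n - 1 := by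
    rw [← hScard, hSeq, herase, hcardA]
  refine ⟨⟨exists_pair_ne A, mul_comm, ?_⟩, ?_, ?_⟩
  · intro a ha
    have haS : a ∈ S := by rw [hSeq]; exact Finset.mem_erase.mpr ⟨ha, Finset.mem_univ a⟩
    rw [hS, Finset.mem_image] at haS
    obtain ⟨w, _, rfl⟩ := haS
    exact ⟨↑w⁻¹, w.mul_inv⟩
  · rw [Nat.card_eq_fintype_card, hcardA]
  · rw [Nat.card_eq_fintype_card, hcardU]

/-- `V` is one-dimensional over the field `SA g`. -/
lemma nonempty_linEquiv (m : Mx) (hfield : IsField (SA m))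
    (hcard : Nat.card (SA m) = q ^ n) :
    Nonempty (V ≃ₗ[SA m] (SA m)) := by
  have hq2 : 2 ≤ q := (Fact.out : Nat.Prime q).two_le
  have hqn : 2 ≤ q ^ n := le_trans hq2 (Nat.le_self_pow (NeZero.ne n) q)
  letI := hfield.toField
  haveI : Fintype (SA m) := Fintype.ofFinite _
  have hc : Fintype.card (Fin n → ZMod q) =
      Fintype.card (SA m) ^ Module.finrank (SA m) (Fin n → ZMod q) :=
    Module.card_eq_pow_finrank
  have hV_card : Fintype.card (Fin n → ZMod q) = q ^ n := by simp [ZMod.card]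
  rw [hV_card, ← Nat.card_eq_fintype_card, hcard] at hc
  have h8 : (q ^ n) ^ Module.finrank (SA m) (Fin n → ZMod q) = (q ^ n) ^ 1 := by
    rw [pow_one]; exact hc.symm
  have hrank : Module.finrank (SA m) (Fin n → ZMod q) = 1 := Nat.pow_right_injective hqn h8
  exact ⟨(Module.finBasisOfFinrankEq (SA m) _ hrank).equivFun.trans
    (LinearEquiv.funUnique (Fin 1) (SA m) (SA m))⟩

/-- There is an element of `GL_n(F_q)` conjugating `g` to `g ^ q`. -/
lemma exists_frobenius_conj (g : Mxˣ) (hfield : IsField (SA ((g : Mx))))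
    (e : V ≃ₗ[SA ((g : Mx))] (SA ((g : Mx)))) :
    ∃ h₀ : Mxˣ, h₀ * g * h₀⁻¹ = g ^ q := by
  set A := SA ((g : Mx)) with hA
  haveI : Nontrivial A := ⟨hfield.exists_pair_ne⟩
  haveI : CharP A q := charP_of_injective_algebraMap (algebraMap (ZMod q) A).injective q
  haveI : ExpChar A q := ExpChar.prime Fact.out
  haveI : IsReduced A := by letI := hfield.toField; exact inferInstance
  set φ : A →+* A := frobenius A q with hφdef
  have hφinj : Function.Injective φ := frobenius_inj A q
  have hφbij : Function.Bijective φ := ⟨hφinj, Finite.surjective_of_injective hφinj⟩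
  set φE : A ≃ A := Equiv.ofBijective φ hφbij with hφE
  set ℓ : V ≃ₗ[ZMod q] V :=
    { toFun := fun v => e.symm (φ (e v))
      invFun := fun v => e.symm (φE.symm (e v))
      left_inv := fun v => by
        show e.symm (φE.symm (e (e.symm (φ (e v))))) = v
        rw [e.apply_symm_apply, show φ (e v) = φE (e v) from rfl, Equiv.symm_apply_apply,
          e.symm_apply_apply]
      right_inv := fun v => by
        show e.symm (φ (e (e.symm (φE.symm (e v))))) = v
        rw [e.apply_symm_apply, show φ (φE.symm (e v)) = φE (φE.symm (e v)) from rfl,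
          Equiv.apply_symm_apply, e.symm_apply_apply]
      map_add' := fun v w => by simp only [_root_.map_add]
      map_smul' := fun c v => by
        simp only [RingHom.id_apply]
        rw [← algebraMap_smul_eq ((g : Mx)) c v, e.map_smul, smul_eq_mul, _root_.map_mul]
        have hc : φ (algebraMap (ZMod q) A c) = algebraMap (ZMod q) A c := by
          rw [hφdef, frobenius_def, ← _root_.map_pow, ZMod.pow_card]
        rw [hc, ← smul_eq_mul, e.symm.map_smul, algebraMap_smul_eq] } with hℓdef
  have hℓapp : ∀ v, ℓ v = e.symm (φ (e v)) := fun v => rfl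
  have hℓsymm : ∀ v, ℓ.symm v = e.symm (φE.symm (e v)) := fun v => rfl
  set h₀ : Mxˣ :=
    { val := LinearMap.toMatrix' (ℓ : V →ₗ[ZMod q] V)
      inv := LinearMap.toMatrix' (ℓ.symm : V →ₗ[ZMod q] V)
      val_inv := by
        rw [← LinearMap.toMatrix'_comp]
        have h1 : (ℓ : V →ₗ[ZMod q] V) ∘ₗ (ℓ.symm : V →ₗ[ZMod q] V) = LinearMap.id :=
          LinearMap.ext fun v => ℓ.apply_symm_apply v
        rw [h1, LinearMap.toMatrix'_id]
      inv_val := by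
        rw [← LinearMap.toMatrix'_comp]
        have h1 : (ℓ.symm : V →ₗ[ZMod q] V) ∘ₗ (ℓ : V →ₗ[ZMod q] V) = LinearMap.id :=
          LinearMap.ext fun v => ℓ.symm_apply_apply v
        rw [h1, LinearMap.toMatrix'_id] } with hh₀def
  have h₀mul : ∀ v, (h₀ : Mx) *ᵥ v = ℓ v := fun v => by
    rw [show (h₀ : Mx) = LinearMap.toMatrix' (ℓ : V →ₗ[ZMod q] V) from rfl,
      ← Matrix.toLin'_apply, Matrix.toLin'_toMatrix']
    rfl
  have h₀invmul : ∀ v, ((h₀⁻¹ : Mxˣ) : Mx) *ᵥ v = ℓ.symm v := fun v => by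
    rw [show ((h₀⁻¹ : Mxˣ) : Mx) = LinearMap.toMatrix' (ℓ.symm : V →ₗ[ZMod q] V) from rfl,
      ← Matrix.toLin'_apply, Matrix.toLin'_toMatrix']
    rfl
  set a₀ : A := ⟨(g : Mx), mem_SA_self _⟩ with ha₀
  have hext : ∀ (x y : Mx), (∀ v, x *ᵥ v = y *ᵥ v) → x = y := by
    intro x y h
    refine Matrix.toLin'.injective (LinearMap.ext fun v => ?_)
    rw [Matrix.toLin'_apply, Matrix.toLin'_apply]; exact h v
  refine ⟨h₀, ?_⟩
  apply Units.ext
  refine hext _ _ fun v => ?_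
  rw [Units.val_mul, Units.val_mul, ← Matrix.mulVec_mulVec, ← Matrix.mulVec_mulVec, h₀invmul,
    show (g : Mx) *ᵥ (ℓ.symm v) = a₀ • (ℓ.symm v) from rfl, h₀mul]
  have hgq : ((g ^ q : Mxˣ) : Mx) *ᵥ v = (a₀ ^ q) • v := by
    rw [show ((g ^ q : Mxˣ) : Mx) = ((a₀ ^ q : A) : Mx) by
        rw [Units.val_pow_eq_pow_val, SubmonoidClass.coe_pow]]
    rfl
  rw [hgq]
  apply e.injective
  rw [hℓapp, e.apply_symm_apply]
  have hsmulE : ∀ (a : A) (w : V), e (a • w) = a * e w := fun a w => by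
    rw [e.map_smul, smul_eq_mul]
  have h2 : e (ℓ.symm v) = φE.symm (e v) := by rw [hℓsymm, e.apply_symm_apply]
  have h3 : φ (φE.symm (e v)) = e v := by
    rw [show φ (φE.symm (e v)) = φE (φE.symm (e v)) from rfl, Equiv.apply_symm_apply]
  have h4 : φ a₀ = a₀ ^ q := frobenius_def ..
  rw [hsmulE, hsmulE, _root_.map_mul, h2, h3, h4]

/-- The centralizer of the Singer subgroup is the image of `(SA g)ˣ`. -/
lemma centralizer_eq_range (g : Mxˣ) (ho : orderOf g ≠ 0)
    (e : V ≃ₗ[SA ((g : Mx))] (SA ((g : Mx)))) :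
    Subgroup.centralizer ((Subgroup.zpowers g : Subgroup Mxˣ) : Set Mxˣ) =
      (Units.map ((SA ((g : Mx))).val.toRingHom.toMonoidHom)).range := by
  set A := SA ((g : Mx)) with hA
  ext x
  constructor
  · intro hx
    have hxg : g * x = x * g :=
      Subgroup.mem_centralizer_iff.mp hx g (Subgroup.mem_zpowers g)
    have hxg' : g * x⁻¹ = x⁻¹ * g := by
      calc g * x⁻¹ = x⁻¹ * (x * g) * x⁻¹ := by group
        _ = x⁻¹ * (g * x) * x⁻¹ := by rw [hxg]
        _ = x⁻¹ * g := by group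
    have hmx : (x : Mx) * (g : Mx) = (g : Mx) * (x : Mx) := by
      have h9 := congrArg Units.val hxg
      rw [Units.val_mul, Units.val_mul] at h9
      exact h9.symm
    have hmxi : ((x⁻¹ : Mxˣ) : Mx) * (g : Mx) = (g : Mx) * ((x⁻¹ : Mxˣ) : Mx) := by
      have h9 := congrArg Units.val hxg'
      rw [Units.val_mul, Units.val_mul] at h9
      exact h9.symm
    have hmem1 : (x : Mx) ∈ A := mem_SA_of_commute _ e hmx
    have hmem2 : ((x⁻¹ : Mxˣ) : Mx) ∈ A := mem_SA_of_commute _ e hmxi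
    exact ⟨⟨⟨(x : Mx), hmem1⟩, ⟨((x⁻¹ : Mxˣ) : Mx), hmem2⟩,
      Subtype.ext x.mul_inv, Subtype.ext x.inv_mul⟩, Units.ext rfl⟩
  · rintro ⟨w, rfl⟩
    rw [Subgroup.mem_centralizer_iff]
    intro y hy
    have hWg : (Units.map (A.val.toRingHom.toMonoidHom)) w * g =
        g * (Units.map (A.val.toRingHom.toMonoidHom)) w := by
      apply Units.ext
      rw [Units.val_mul, Units.val_mul]
      exact SA_conj_mem (w.val.2) (mem_SA_self _)
    have hcom : Commute ((Units.map (A.val.toRingHom.toMonoidHom)) w) g := hWg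
    obtain ⟨k, hk⟩ := Subgroup.mem_zpowers_iff.mp hy
    rw [← hk]
    exact ((hcom.zpow_right k).symm).eq

/-- Cardinality of the kernel of the conjugation homomorphism on the normalizer. -/
lemma ker_card (g : Mxˣ) (ho : orderOf g ≠ 0)
    (e : V ≃ₗ[SA ((g : Mx))] (SA ((g : Mx))))
    (hcardU : Nat.card (SA ((g : Mx)))ˣ = q ^ n - 1) :
    Nat.card (Subgroup.normalizerMonoidHom (H := Subgroup.zpowers g)).ker = q ^ n - 1 := by
  have hval_inj : Function.Injective
      ((SA ((g : Mx))).val.toRingHom.toMonoidHom : (SA ((g : Mx))) →* Mx) :=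
    fun a b hab => Subtype.ext hab
  have hUmap_inj : Function.Injective
      (Units.map ((SA ((g : Mx))).val.toRingHom.toMonoidHom)) :=
    Units.map_injective hval_inj
  rw [Subgroup.normalizerMonoidHom_ker,
    Nat.card_congr (Subgroup.subgroupOfEquivOfLe (cent_le_norm (Subgroup.zpowers g))).toEquiv,
    centralizer_eq_range g ho e,
    Nat.card_congr (MulEquiv.toEquiv (MonoidHom.ofInjective hUmap_inj)).symm, hcardU]

/-- Cardinality of the range of the conjugation homomorphism on the normalizer. -/
lemma range_card (g : Mxˣ) (hg : orderOf g = q ^ n - 1)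
    (hdom : IsDomain (SA ((g : Mx))))
    (h₀ : Mxˣ) (hconj : h₀ * g * h₀⁻¹ = g ^ q) :
    Nat.card (Subgroup.normalizerMonoidHom (H := Subgroup.zpowers g)).range = n := by
  have hq2 : 2 ≤ q := (Fact.out : Nat.Prime q).two_le
  have hqn : 2 ≤ q ^ n := le_trans hq2 (Nat.le_self_pow (NeZero.ne n) q)
  have hnpos : 0 < n := Nat.pos_of_ne_zero (NeZero.ne n)
  have hopos : orderOf g ≠ 0 := by rw [hg]; omega
  set A := SA ((g : Mx)) with hA
  set C := Subgroup.zpowers g with hC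
  set ψ := Subgroup.normalizerMonoidHom (H := C) with hψ
  have hmem₀ : h₀ ∈ Subgroup.normalizer (C : Set Mxˣ) := mem_normalizer_of_conj_pow hconj
  set σ : MulAut C := ψ ⟨h₀, hmem₀⟩ with hσdef
  set gC : C := ⟨g, Subgroup.mem_zpowers g⟩ with hgCdef
  have hσapp : ∀ (w : Subgroup.normalizer (C : Set Mxˣ)) (x : C), ((ψ w x : C) : Mxˣ)
      = (w : Mxˣ) * (x : Mxˣ) * ((w : Mxˣ))⁻¹ := fun w x => rfl
  have hσg : σ gC = gC ^ q := by
    apply Subtype.ext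
    rw [hσdef, hσapp]
    show h₀ * g * h₀⁻¹ = ((gC ^ q : C) : Mxˣ)
    rw [hconj, SubmonoidClass.coe_pow]
  have hgen : ∀ τ₁ τ₂ : MulAut C, τ₁ gC = τ₂ gC → τ₁ = τ₂ := by
    intro τ₁ τ₂ h
    apply MulEquiv.ext
    intro x
    obtain ⟨k, hk⟩ := Subgroup.mem_zpowers_iff.mp x.2
    have hx : x = gC ^ k := by
      apply Subtype.ext
      rw [← hk, SubgroupClass.coe_zpow]
    rw [hx, map_zpow, map_zpow, h]
  have horder_gC : orderOf gC = q ^ n - 1 := by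
    have h1 := orderOf_injective C.subtype Subtype.coe_injective gC
    rw [← hg, ← h1]
    rfl
  have hpow : ∀ i : ℕ, (σ ^ i) gC = gC ^ (q ^ i) := by
    intro i; induction i with
    | zero => simp
    | succ i ih =>
      rw [pow_succ, MulAut.mul_apply, hσg, map_pow, ih, ← pow_mul, ← pow_succ]
  have hiff : ∀ i : ℕ, σ ^ i = 1 ↔ (q ^ n - 1) ∣ (q ^ i - 1) := by
    intro i
    have hqi : 1 ≤ q ^ i := Nat.one_le_pow _ _ (by omega)
    constructor
    · intro h
      have h1 : gC ^ (q ^ i) = gC ^ 1 := by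
        rw [← hpow i, h, pow_one]; rfl
      have h2 := pow_eq_pow_iff_modEq.mp h1
      rw [horder_gC] at h2
      exact (Nat.modEq_iff_dvd' hqi).mp h2.symm
    · intro h
      apply hgen (σ ^ i) 1
      rw [hpow i]
      show gC ^ (q ^ i) = gC
      have h2 : gC ^ (q ^ i) = gC ^ 1 := by
        apply pow_eq_pow_iff_modEq.mpr
        rw [horder_gC]
        exact ((Nat.modEq_iff_dvd' hqi).mpr h).symm
      rw [h2, pow_one]
  have horderσ : orderOf σ = n := by
    have h1 : σ ^ n = 1 := (hiff n).mpr dvd_rfl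
    have hfin : IsOfFinOrder σ := isOfFinOrder_iff_pow_eq_one.mpr ⟨n, by omega, h1⟩
    have hdvd : orderOf σ ∣ n := orderOf_dvd_of_pow_eq_one h1
    have hle : orderOf σ ≤ n := Nat.le_of_dvd (by omega) hdvd
    have hpos : 0 < orderOf σ := hfin.orderOf_pos
    have h2 : (q ^ n - 1) ∣ (q ^ (orderOf σ) - 1) := (hiff _).mp (pow_orderOf_eq_one σ)
    have h3 : 0 < q ^ (orderOf σ) - 1 := by
      have : 2 ≤ q ^ (orderOf σ) := le_trans hq2 (Nat.le_self_pow (by omega) q)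
      omega
    have h4 : q ^ n - 1 ≤ q ^ (orderOf σ) - 1 := Nat.le_of_dvd h3 h2
    have h5 : q ^ n ≤ q ^ (orderOf σ) := by omega
    have h6 : n ≤ orderOf σ := (Nat.pow_le_pow_iff_right (by omega)).mp h5
    omega
  haveI : Finite (MulAut C) :=
    Finite.of_injective (fun τ : MulAut C => (τ : C → C))
      (fun a b hab => MulEquiv.ext (fun x => congrFun hab x))
  have hrange_le : Nat.card ψ.range ≤ n := by
    haveI := hdom
    set p := minpoly (ZMod q) ((g : Mx)) with hpdef
    haveI : Finite (p.rootSet A) := (p.rootSet_finite A).to_subtype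
    have hint : IsIntegral (ZMod q) ((g : Mx)) := .of_finite _ _
    have hmono := minpoly.monic hint
    have hfA : ∀ τ : ψ.range, ((((τ : MulAut C) gC : C) : Mxˣ) : Mx) ∈ A := fun τ =>
      units_val_mem_SA hopos ((τ : MulAut C) gC).2
    have hfroot : ∀ τ : ψ.range, (⟨_, hfA τ⟩ : A) ∈ p.rootSet A := by
      rintro ⟨τ, ⟨w, rfl⟩⟩
      rw [Polynomial.mem_rootSet]
      refine ⟨hmono.ne_zero, ?_⟩
      have hval : ((((ψ w) gC : C) : Mxˣ) : Mx) = conjAlgHom (w : Mxˣ) ((g : Mx)) := by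
        rw [conjAlgHom_apply]
        have h9 := congrArg Units.val (hσapp w gC)
        rw [Units.val_mul, Units.val_mul] at h9
        exact h9
      have hz : (aeval (((((ψ w) gC : C) : Mxˣ) : Mx))) p = 0 := by
        rw [hval, Polynomial.aeval_algHom_apply, hpdef, minpoly.aeval, _root_.map_zero]
      rw [← Subalgebra.coe_eq_zero, Polynomial.aeval_subalgebra_coe]
      exact hz
    set f : ψ.range → p.rootSet A := fun τ => ⟨⟨_, hfA τ⟩, hfroot τ⟩ with hfdef
    have hfinj : Function.Injective f := by
      intro τ₁ τ₂ h
      have h1 : (τ₁ : MulAut C) gC = (τ₂ : MulAut C) gC := by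
        apply Subtype.ext
        apply Units.ext
        exact congrArg (fun z : p.rootSet A => ((z : A) : Mx)) h
      exact Subtype.ext (hgen _ _ h1)
    have h5 : Nat.card ψ.range ≤ Nat.card (p.rootSet A) :=
      Nat.card_le_card_of_injective f hfinj
    have h6 : Nat.card (p.rootSet A) ≤ p.natDegree := by
      rw [Polynomial.rootSet_def, Nat.card_coe_set_eq, Set.ncard_coe_finset]
      calc (p.aroots A).toFinset.card ≤ Multiset.card (p.aroots A) :=
            Multiset.toFinset_card_le _
        _ ≤ (p.map (algebraMap (ZMod q) A)).natDegree := Polynomial.card_roots' _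
        _ ≤ p.natDegree := Polynomial.natDegree_map_le
    exact le_trans h5 (le_trans h6 (natDegree_minpoly_le _))
  have hσmem : σ ∈ ψ.range := ⟨⟨h₀, hmem₀⟩, rfl⟩
  have horderσr : orderOf (⟨σ, hσmem⟩ : ψ.range) = n := by
    have h1 : orderOf (ψ.range.subtype ⟨σ, hσmem⟩) = orderOf (⟨σ, hσmem⟩ : ψ.range) :=
      orderOf_injective _ Subtype.coe_injective _
    have h2 : orderOf (ψ.range.subtype ⟨σ, hσmem⟩) = n := horderσ
    exact h1.symm.trans h2
  have hdvd : n ∣ Nat.card ψ.range := by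
    have h3 := orderOf_dvd_natCard (⟨σ, hσmem⟩ : ψ.range)
    rwa [horderσr] at h3
  have hpos : 0 < Nat.card ψ.range := Nat.card_pos
  exact le_antisymm hrange_le (Nat.le_of_dvd hpos hdvd)

end SingerAux

open SingerAux

/-- Let `q` be a prime and `n ≥ 1`. If `C_α = Subgroup.zpowers g` is a Singer subgroup of
`GL(n, q)` (i.e. generated by an element `g` of order `q ^ n - 1`), then its normalizer
has order `n * (q ^ n - 1)`. -/
theorem card_normalizer_singer (q n : ℕ) (hq : Nat.Prime q) (hn : 1 ≤ n)
    (g : GL (Fin n) (ZMod q)) (hg : orderOf g = q ^ n - 1) :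
    Nat.card (Subgroup.normalizer ((Subgroup.zpowers g : Subgroup (GL (Fin n) (ZMod q))) : Set (GL (Fin n) (ZMod q)))) = n * (q ^ n - 1) := by
  haveI : Fact (Nat.Prime q) := ⟨hq⟩
  haveI : NeZero n := ⟨by omega⟩
  have hq2 : 2 ≤ q := hq.two_le
  have hqn : 2 ≤ q ^ n := le_trans hq2 (Nat.le_self_pow (by omega) q)
  have hopos : orderOf g ≠ 0 := by rw [hg]; omega
  obtain ⟨hfield, hcardA, hcardU⟩ := isField_SA g hg
  obtain ⟨e⟩ := nonempty_linEquiv ((g : Matrix (Fin n) (Fin n) (ZMod q))) hfield hcardA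
  have hdom : IsDomain (SA ((g : Matrix (Fin n) (Fin n) (ZMod q)))) := by
    letI := hfield.toField
    exact inferInstance
  obtain ⟨h₀, hconj⟩ := exists_frobenius_conj g hfield e
  have hker := ker_card g hopos e hcardU
  have hrange := range_card g hg hdom h₀ hconj
  set ψ := Subgroup.normalizerMonoidHom (H := Subgroup.zpowers g) with hψ
  calc Nat.card (Subgroup.normalizer ((Subgroup.zpowers g : Subgroup (GL (Fin n) (ZMod q))) : Set (GL (Fin n) (ZMod q))))
      = Nat.card ((Subgroup.normalizer ((Subgroup.zpowers g : Subgroup (GL (Fin n) (ZMod q))) : Set (GL (Fin n) (ZMod q)))) ⧸ ψ.ker) * Nat.card ψ.ker :=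
        Subgroup.card_eq_card_quotient_mul_card_subgroup ψ.ker
    _ = Nat.card ψ.range * Nat.card ψ.ker := by
        rw [Nat.card_congr (QuotientGroup.quotientKerEquivRange ψ).toEquiv]
    _ = n * (q ^ n - 1) := by rw [hker, hrange]
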